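/- Let α > 1, weights 1 ≥ γ_1 ≥ … ≥ γ_d > 0, N ≥ 1, and τ ∈ (1/α, 1). Then Σ_{h ∈ ℤ^d \ A_d(N)} r_d(α,γ,h)^{-1} ≤ |A_d(N)|^{1-1/τ} · (τ/(1-τ)) · ∏_{j=1}^d (1 + 2ζ(ατ) γ_j^τ)^{1/τ}. -/

import Mathlib

noncomputable def realZeta (s : ℝ) : ℝ := ∑' n : ℕ, ((n : ℝ) + 1) ^ (-s)

lemma kv_summable {s : ℝ} (hs : 1 < s) :
    Summable (fun n : ℕ => ((n : ℝ) + 1) ^ (-s)) := by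
  have h : Summable (fun n : ℕ => (n : ℝ) ^ (-s)) :=
    Real.summable_nat_rpow.2 (by linarith)
  have h2 := h.comp_injective (add_left_injective 1)
  refine h2.congr fun n => ?_
  simp only [Function.comp_apply]
  congr 1
  push_cast
  ring

lemma kv_zeta_nonneg (s : ℝ) : 0 ≤ realZeta s :=
  tsum_nonneg fun n => Real.rpow_nonneg (by positivity) _

lemma kv_partial {s : ℝ} (hs : 1 < s) (K : ℕ) :
    ∑ j ∈ Finset.range K, ((j : ℝ) + 1) ^ (-s) ≤ realZeta s :=
  Summable.sum_le_tsum _ (fun i _ => Real.rpow_nonneg (by positivity) _) (kv_summable hs)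

lemma kv_int_sum {s : ℝ} (hs : 1 < s) (T : Finset ℤ) (h0 : (0:ℤ) ∉ T) :
    ∑ z ∈ T, |(z : ℝ)| ^ (-s) ≤ 2 * realZeta s := by
  classical
  set K := T.sup Int.natAbs with hK
  have hsub : T ⊆ (Finset.Icc (-(K:ℤ)) K).filter (· ≠ 0) := by
    intro z hz
    have h1 : z.natAbs ≤ K := Finset.le_sup hz
    have h2 : z ≠ 0 := fun h => h0 (h ▸ hz)
    simp only [Finset.mem_filter, Finset.mem_Icc]
    refine ⟨⟨?_, ?_⟩, h2⟩ <;> omega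
  have hnn : ∀ z : ℤ, 0 ≤ |(z:ℝ)| ^ (-s) := fun z => Real.rpow_nonneg (abs_nonneg _) _
  have h1 : ∑ z ∈ T, |(z : ℝ)| ^ (-s) ≤
      ∑ z ∈ (Finset.Icc (-(K:ℤ)) K).filter (· ≠ 0), |(z : ℝ)| ^ (-s) :=
    Finset.sum_le_sum_of_subset_of_nonneg hsub (fun z _ _ => hnn z)
  have hsplit : (Finset.Icc (-(K:ℤ)) K).filter (· ≠ 0) =
      Finset.Icc (-(K:ℤ)) (-1) ∪ Finset.Icc 1 K := by
    ext z
    simp only [Finset.mem_filter, Finset.mem_Icc, Finset.mem_union]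
    omega
  have hdisj : Disjoint (Finset.Icc (-(K:ℤ)) (-1)) (Finset.Icc (1:ℤ) K) := by
    rw [Finset.disjoint_left]
    intro z hz hz'
    simp only [Finset.mem_Icc] at hz hz'
    omega
  have hneg : ∑ z ∈ Finset.Icc (-(K:ℤ)) (-1), |(z : ℝ)| ^ (-s)
      = ∑ z ∈ Finset.Icc (1:ℤ) K, |(z : ℝ)| ^ (-s) := by
    refine Finset.sum_nbij' (fun z => -z) (fun z => -z) ?_ ?_ ?_ ?_ ?_
    · intro z hz; simp only [Finset.mem_Icc] at hz ⊢; omega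
    · intro z hz; simp only [Finset.mem_Icc] at hz ⊢; omega
    · intro z _; ring
    · intro z _; ring
    · intro z _; rw [show ((-z : ℤ) : ℝ) = -(z:ℝ) by push_cast; ring, abs_neg]
  have hpos : ∑ z ∈ Finset.Icc (1:ℤ) K, |(z : ℝ)| ^ (-s)
      = ∑ j ∈ Finset.range K, ((j : ℝ) + 1) ^ (-s) := by
    refine Finset.sum_nbij' (fun z => (z - 1).toNat) (fun j => (j : ℤ) + 1) ?_ ?_ ?_ ?_ ?_
    · intro z hz; simp only [Finset.mem_Icc] at hz; simp only [Finset.mem_range]; omega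
    · intro j hj; simp only [Finset.mem_range] at hj; simp only [Finset.mem_Icc]; omega
    · intro z hz; simp only [Finset.mem_Icc] at hz; show ((z-1).toNat : ℤ) + 1 = z; omega
    · intro j _; show ((((j:ℤ)+1) - 1).toNat) = j; omega
    · intro z hz
      simp only [Finset.mem_Icc] at hz
      have : ((z - 1).toNat : ℝ) + 1 = (z : ℝ) := by
        have : ((z - 1).toNat : ℤ) = z - 1 := by omega
        have := congrArg (fun t : ℤ => (t : ℝ)) this
        push_cast at this ⊢
        linarith
      rw [this, abs_of_pos (by exact_mod_cast hz.1.trans_lt' (by norm_num) : (0:ℝ) < z)]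
  calc ∑ z ∈ T, |(z : ℝ)| ^ (-s) ≤ _ := h1
    _ = _ + _ := by rw [hsplit, Finset.sum_union hdisj]
    _ ≤ realZeta s + realZeta s := by
        rw [hneg, hpos]
        have := kv_partial hs K
        linarith
    _ = 2 * realZeta s := by ring

lemma kv_coord {a τ g : ℝ} (ha : 1 < a) (hτ0 : 0 < τ) (hs : 1 < a * τ)
    (hg0 : 0 < g) (hg1 : g ≤ 1) (T : Finset ℤ) :
    ∑ z ∈ T, (max 1 (g⁻¹ * |(z : ℝ)| ^ a)) ^ (-τ) ≤ 1 + 2 * realZeta (a * τ) * g ^ τ := by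
  classical
  set f : ℤ → ℝ := fun z => (max 1 (g⁻¹ * |(z : ℝ)| ^ a)) ^ (-τ) with hf
  have hf0 : ∀ z, 0 ≤ f z := fun z =>
    Real.rpow_nonneg (le_trans zero_le_one (le_max_left _ _)) _
  have hzero : f 0 = 1 := by
    simp only [hf, Int.cast_zero, abs_zero, Real.zero_rpow (by linarith : a ≠ 0), mul_zero]
    rw [max_eq_left zero_le_one, Real.one_rpow]
  have hne : ∀ z : ℤ, z ≠ 0 → f z = g ^ τ * |(z:ℝ)| ^ (-(a * τ)) := by
    intro z hz
    have h1 : (1:ℝ) ≤ |(z:ℝ)| := by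
      rw [← Int.cast_abs]
      exact_mod_cast Int.one_le_abs hz
    have hza : (1:ℝ) ≤ |(z:ℝ)| ^ a := by
      calc (1:ℝ) = 1 ^ a := (Real.one_rpow a).symm
        _ ≤ |(z:ℝ)| ^ a := Real.rpow_le_rpow zero_le_one h1 (by linarith)
    have hginv : (1:ℝ) ≤ g⁻¹ := (one_le_inv₀ hg0).2 hg1
    have hmax : max 1 (g⁻¹ * |(z:ℝ)| ^ a) = g⁻¹ * |(z:ℝ)| ^ a :=
      max_eq_right (by nlinarith)
    rw [hf]
    simp only []
    rw [hmax, Real.mul_rpow (by positivity) (by positivity),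
      Real.inv_rpow hg0.le, ← Real.rpow_neg hg0.le, neg_neg,
      ← Real.rpow_mul (abs_nonneg _), mul_neg]
  rw [← Finset.sum_filter_add_sum_filter_not T (fun z => z = 0)]
  have hpart1 : ∑ z ∈ T.filter (fun z => z = 0), f z ≤ 1 := by
    have hsub : T.filter (fun z => z = 0) ⊆ {0} := by
      intro z hz; simp only [Finset.mem_filter] at hz; simp [hz.2]
    calc ∑ z ∈ T.filter (fun z => z = 0), f z ≤ ∑ z ∈ ({0} : Finset ℤ), f z :=
        Finset.sum_le_sum_of_subset_of_nonneg hsub (fun z _ _ => hf0 z)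
      _ = 1 := by rw [Finset.sum_singleton, hzero]
  have hpart2 : ∑ z ∈ T.filter (fun z => ¬ z = 0), f z ≤ 2 * realZeta (a*τ) * g ^ τ := by
    have heq : ∑ z ∈ T.filter (fun z => ¬ z = 0), f z
        = g ^ τ * ∑ z ∈ T.filter (fun z => ¬ z = 0), |(z:ℝ)| ^ (-(a*τ)) := by
      rw [Finset.mul_sum]
      refine Finset.sum_congr rfl fun z hz => ?_
      simp only [Finset.mem_filter] at hz
      exact hne z hz.2
    rw [heq]
    have hle := kv_int_sum hs (T.filter (fun z => ¬ z = 0)) (by simp)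
    have hgτ : 0 ≤ g ^ τ := Real.rpow_nonneg hg0.le _
    nlinarith [hle, hgτ]
  linarith

set_option maxHeartbeats 1000000 in
lemma kv_Msum {d : ℕ} {a τ : ℝ} (ha : 1 < a) (hτ0 : 0 < τ) (hs : 1 < a * τ)
    (γ : Fin d → ℝ) (hγ0 : ∀ j, 0 < γ j) (hγ1 : ∀ j, γ j ≤ 1)
    (F : Finset (Fin d → ℤ)) :
    ∑ h ∈ F, (∏ j, max 1 ((γ j)⁻¹ * |(h j : ℝ)| ^ a)) ^ (-τ)
      ≤ ∏ j, (1 + 2 * realZeta (a * τ) * γ j ^ τ) := by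
  classical
  have hterm : ∀ h : Fin d → ℤ, (∏ j, max 1 ((γ j)⁻¹ * |(h j : ℝ)| ^ a)) ^ (-τ)
      = ∏ j, (max 1 ((γ j)⁻¹ * |(h j : ℝ)| ^ a)) ^ (-τ) := fun h =>
    (Real.finset_prod_rpow _ _ (fun j _ => le_trans zero_le_one (le_max_left _ _)) _).symm
  simp only [hterm]
  set T : Fin d → Finset ℤ := fun j => F.image (fun h => h j) with hT
  have hsub : F ⊆ Fintype.piFinset T := by
    intro h hh
    rw [Fintype.mem_piFinset]
    exact fun j => Finset.mem_image_of_mem _ hh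
  have hnn : ∀ h : Fin d → ℤ, 0 ≤ ∏ j, (max 1 ((γ j)⁻¹ * |(h j : ℝ)| ^ a)) ^ (-τ) :=
    fun h => Finset.prod_nonneg fun j _ =>
      Real.rpow_nonneg (le_trans zero_le_one (le_max_left _ _)) _
  calc ∑ h ∈ F, ∏ j, (max 1 ((γ j)⁻¹ * |(h j : ℝ)| ^ a)) ^ (-τ)
      ≤ ∑ h ∈ Fintype.piFinset T, ∏ j, (max 1 ((γ j)⁻¹ * |(h j : ℝ)| ^ a)) ^ (-τ) :=
        Finset.sum_le_sum_of_subset_of_nonneg hsub (fun h _ _ => hnn h)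
    _ = ∏ j, ∑ z ∈ T j, (max 1 ((γ j)⁻¹ * |(z : ℝ)| ^ a)) ^ (-τ) :=
        (Finset.prod_univ_sum T (fun j z => (max 1 ((γ j)⁻¹ * |(z : ℝ)| ^ a)) ^ (-τ))).symm
    _ ≤ ∏ j, (1 + 2 * realZeta (a * τ) * γ j ^ τ) := by
        refine Finset.prod_le_prod (fun j _ => ?_) (fun j _ => ?_)
        · exact Finset.sum_nonneg fun z _ =>
            Real.rpow_nonneg (le_trans zero_le_one (le_max_left _ _)) _
        · exact kv_coord ha hτ0 hs (hγ0 j) (hγ1 j) (T j)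

lemma kv_tail {τ : ℝ} (hτ0 : 0 < τ) (hτ2 : τ < 1) (m k : ℕ) (hm : 1 ≤ m) :
    ∑ i ∈ Finset.range k, ((m : ℝ) + 1 + i) ^ (-(1/τ))
      ≤ τ / (1 - τ) * (m : ℝ) ^ (1 - 1/τ) := by
  have hq : 1 < 1/τ := by rw [lt_div_iff₀ hτ0]; linarith
  set q : ℝ := 1/τ with hqdef
  set aa : ℝ := q - 1 with hadef
  have haa : 0 < aa := by simp only [hadef]; linarith
  have hm1 : (1:ℝ) ≤ (m:ℝ) := by exact_mod_cast hm
  set f : ℕ → ℝ := fun i => ((m : ℝ) + i) ^ (-aa) with hfdef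
  have key : ∀ i : ℕ, ((m:ℝ) + 1 + i) ^ (-q) ≤ (1/aa) * (f i - f (i+1)) := by
    intro i
    set x : ℝ := (m:ℝ) + i with hx
    have hx1 : (1:ℝ) ≤ x := by
      have : (0:ℝ) ≤ i := Nat.cast_nonneg i
      simp only [hx]; linarith
    have hx0 : (0:ℝ) < x := by linarith
    have hy0 : (0:ℝ) < x + 1 := by linarith
    have hu0 : (0:ℝ) < x / (x+1) := by positivity
    have hber : 1 + aa/(x+1) ≤ (x/(x+1)) ^ (-aa) := by
      rw [Real.rpow_def_of_pos hu0, mul_comm]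
      have hlog : Real.log (x/(x+1)) ≤ x/(x+1) - 1 := Real.log_le_sub_one_of_pos hu0
      have hxx : x/(x+1) - 1 = -(1/(x+1)) := by field_simp; ring
      have h2 : aa/(x+1) ≤ (-aa) * Real.log (x/(x+1)) := by
        rw [hxx] at hlog
        have := mul_le_mul_of_nonneg_left (neg_le_neg hlog) haa.le
        calc aa/(x+1) = aa * (1/(x+1)) := by ring
          _ ≤ aa * (- Real.log (x/(x+1))) := by
              have : -(-(1/(x+1))) ≤ - Real.log (x/(x+1)) := neg_le_neg hlog
              simp only [neg_neg] at this
              exact mul_le_mul_of_nonneg_left this haa.le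
          _ = (-aa) * Real.log (x/(x+1)) := by ring
      have h3 := Real.add_one_le_exp ((-aa) * Real.log (x/(x+1)))
      linarith
    have hfact : x ^ (-aa) = (x/(x+1)) ^ (-aa) * (x+1) ^ (-aa) := by
      rw [← Real.mul_rpow (le_of_lt hu0) hy0.le]
      congr 1
      field_simp
    have h3 : (1 + aa/(x+1)) * (x+1) ^ (-aa) ≤ x ^ (-aa) := by
      rw [hfact]
      exact mul_le_mul_of_nonneg_right hber (Real.rpow_nonneg hy0.le _)
    have h4 : (x+1) ^ (-aa) / (x+1) = (x+1) ^ (-q) := by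
      rw [show (-q : ℝ) = -aa - 1 by simp only [hadef]; ring, Real.rpow_sub hy0, Real.rpow_one]
    have h5 : aa * (x+1) ^ (-q) ≤ x ^ (-aa) - (x+1) ^ (-aa) := by
      have hexp : (1 + aa/(x+1)) * (x+1) ^ (-aa)
          = (x+1) ^ (-aa) + aa * ((x+1) ^ (-aa) / (x+1)) := by ring
      rw [hexp, h4] at h3
      linarith
    have hfi : f i = x ^ (-aa) := rfl
    have hfi1 : f (i+1) = (x+1) ^ (-aa) := by
      simp only [hfdef, hx]
      push_cast
      ring_nf
    rw [show ((m:ℝ) + 1 + (i:ℝ)) = x + 1 from by rw [hx]; ring, hfi, hfi1]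
    calc (x+1) ^ (-q) = (1/aa) * (aa * (x+1) ^ (-q)) := by field_simp
      _ ≤ (1/aa) * (x ^ (-aa) - (x+1) ^ (-aa)) :=
          mul_le_mul_of_nonneg_left h5 (by positivity)
  calc ∑ i ∈ Finset.range k, ((m:ℝ) + 1 + i) ^ (-q)
      ≤ ∑ i ∈ Finset.range k, (1/aa) * (f i - f (i+1)) :=
        Finset.sum_le_sum (fun i _ => key i)
    _ = (1/aa) * (f 0 - f k) := by rw [← Finset.mul_sum, Finset.sum_range_sub' f k]
    _ ≤ (1/aa) * f 0 := by
        have hfk : 0 ≤ f k := Real.rpow_nonneg (by positivity) _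
        have hstep : f 0 - f k ≤ f 0 := by linarith
        exact mul_le_mul_of_nonneg_left hstep (by positivity)
    _ = τ/(1-τ) * (m:ℝ) ^ (1 - 1/τ) := by
        have h1 : f 0 = (m:ℝ) ^ (1 - 1/τ) := by
          simp only [hfdef, Nat.cast_zero, add_zero]
          congr 1
          simp only [hadef, hqdef]
          ring
        have haeq : aa = (1-τ)/τ := by
          simp only [hadef, hqdef]
          field_simp
        have h2 : (1:ℝ)/aa = τ/(1-τ) := by rw [haeq, one_div_div]
        rw [h1, h2]

set_option maxHeartbeats 1000000 in
theorem korobov_truncation_error (d : ℕ) (α : ℝ) (hα : 1 < α)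
    (γ : Fin d → ℝ) (hγpos : ∀ j, 0 < γ j) (hγ1 : ∀ j, γ j ≤ 1)
    (hγmono : ∀ i j : Fin d, i ≤ j → γ j ≤ γ i)
    (N : ℝ) (hN : 1 ≤ N) (τ : ℝ) (hτ1 : 1 / α < τ) (hτ2 : τ < 1)
    (hA : {h : Fin d → ℤ | (∏ j, max 1 ((γ j)⁻¹ * |(h j : ℝ)| ^ α)) ≤ N}.Finite) :
    (∑' g : {h : Fin d → ℤ // ¬ (∏ j, max 1 ((γ j)⁻¹ * |(h j : ℝ)| ^ α)) ≤ N},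
        (∏ j, max 1 ((γ j)⁻¹ * |(g.1 j : ℝ)| ^ α))⁻¹) ≤
      (hA.toFinset.card : ℝ) ^ (1 - 1 / τ) * (τ / (1 - τ)) *
        ∏ j, (1 + 2 * realZeta (α * τ) * γ j ^ τ) ^ (1 / τ) := by
  classical
  have hα0 : (0:ℝ) < α := by linarith
  have hτ0 : (0:ℝ) < τ := lt_trans (by positivity) hτ1
  have hs : 1 < α * τ := by
    have := (div_lt_iff₀ hα0).1 hτ1
    nlinarith
  set r : (Fin d → ℤ) → ℝ := fun h => ∏ j, max 1 ((γ j)⁻¹ * |(h j : ℝ)| ^ α) with hrdef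
  have hr1 : ∀ h, 1 ≤ r h := by
    intro h
    simp only [hrdef]
    calc (1:ℝ) = ∏ _j : Fin d, 1 := by rw [Finset.prod_const_one]
      _ ≤ ∏ j, max 1 ((γ j)⁻¹ * |(h j : ℝ)| ^ α) :=
          Finset.prod_le_prod (fun _ _ => zero_le_one) (fun j _ => le_max_left _ _)
  have hr0 : ∀ h, 0 < r h := fun h => lt_of_lt_of_le one_pos (hr1 h)
  set Z : ℝ := realZeta (α * τ) with hZdef
  have hZ0 : 0 ≤ Z := kv_zeta_nonneg _
  set M : ℝ := ∏ j, (1 + 2 * Z * γ j ^ τ) with hMdef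
  have hM1 : 1 ≤ M := by
    rw [hMdef]
    calc (1:ℝ) = ∏ _j : Fin d, 1 := by rw [Finset.prod_const_one]
      _ ≤ ∏ j, (1 + 2 * Z * γ j ^ τ) := by
          refine Finset.prod_le_prod (fun _ _ => zero_le_one) (fun j _ => ?_)
          have : 0 ≤ γ j ^ τ := Real.rpow_nonneg (hγpos j).le _
          nlinarith
  have hM0 : (0:ℝ) < M := lt_of_lt_of_le one_pos hM1
  set m : ℕ := hA.toFinset.card with hmdef
  have hm1 : 1 ≤ m := by
    rw [hmdef, Nat.one_le_iff_ne_zero, ← Nat.pos_iff_ne_zero, Finset.card_pos]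
    refine ⟨fun _ => 0, ?_⟩
    rw [Set.Finite.mem_toFinset]
    show (∏ j, max 1 ((γ j)⁻¹ * |((0:ℤ) : ℝ)| ^ α)) ≤ N
    calc (∏ j, max 1 ((γ j)⁻¹ * |((0:ℤ) : ℝ)| ^ α)) = ∏ (j : Fin d), 1 := by
          refine Finset.prod_congr rfl fun j _ => ?_
          rw [Int.cast_zero, abs_zero, Real.zero_rpow (by linarith : α ≠ 0), mul_zero]
          exact max_eq_left zero_le_one
      _ = 1 := Finset.prod_const_one
      _ ≤ N := hN
  have hm1R : (1:ℝ) ≤ (m:ℝ) := by exact_mod_cast hm1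
  -- RHS and its nonnegativity
  set RHS : ℝ := (m : ℝ) ^ (1 - 1 / τ) * (τ / (1 - τ)) *
      ∏ j, (1 + 2 * Z * γ j ^ τ) ^ (1 / τ) with hRHSdef
  have hRHS0 : 0 ≤ RHS := by
    refine mul_nonneg (mul_nonneg (Real.rpow_nonneg (by positivity) _) ?_) ?_
    · exact div_nonneg hτ0.le (by linarith)
    · exact Finset.prod_nonneg fun j _ => Real.rpow_nonneg
        (by nlinarith [Real.rpow_nonneg (hγpos j).le τ]) _
  -- key finite-set bound
  have key : ∀ F : Finset (Fin d → ℤ), (∀ h ∈ F, ¬ r h ≤ N) → ∑ h ∈ F, (r h)⁻¹ ≤ RHS := by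
    intro F hF
    obtain ⟨e, he⟩ := exists_injective_nat (Fin d → ℤ)
    set P : (Fin d → ℤ) → (Fin d → ℤ) → Prop :=
      fun x h => r x < r h ∨ (r x = r h ∧ e x ≤ e h) with hPdef
    set n : (Fin d → ℤ) → ℕ := fun h => (F.filter (fun x => P x h)).card with hndef
    have hn1 : ∀ h ∈ F, 1 ≤ n h := by
      intro h hh
      rw [hndef, Nat.one_le_iff_ne_zero, ← Nat.pos_iff_ne_zero, Finset.card_pos]
      exact ⟨h, Finset.mem_filter.2 ⟨hh, Or.inr ⟨rfl, le_refl _⟩⟩⟩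
    have hnle : ∀ h, n h ≤ F.card := fun h => Finset.card_le_card (Finset.filter_subset _ _)
    -- strict monotonicity of n along the tie-broken order
    have hstrict : ∀ h1 ∈ F, ∀ h2 ∈ F,
        (r h1 < r h2 ∨ (r h1 = r h2 ∧ e h1 < e h2)) → n h1 < n h2 := by
      intro h1 hh1 h2 hh2 hlt
      apply Finset.card_lt_card
      rw [Finset.ssubset_iff_of_subset]
      · refine ⟨h2, Finset.mem_filter.2 ⟨hh2, Or.inr ⟨rfl, le_refl _⟩⟩, ?_⟩
        intro hmem
        rcases Finset.mem_filter.1 hmem with ⟨-, hP⟩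
        rcases hlt with h | ⟨heq, hel⟩
        · rcases hP with h' | ⟨h', -⟩ <;> linarith
        · rcases hP with h' | ⟨-, h'⟩
          · linarith
          · omega
      · intro x hx
        rcases Finset.mem_filter.1 hx with ⟨hxF, hP⟩
        refine Finset.mem_filter.2 ⟨hxF, ?_⟩
        rcases hlt with h | ⟨heq, hel⟩
        · rcases hP with h' | ⟨h', -⟩
          · exact Or.inl (by linarith)
          · exact Or.inl (by linarith)
        · rcases hP with h' | ⟨h', he'⟩
          · exact Or.inl (by linarith)
          · exact Or.inr ⟨by linarith, by omega⟩
    have hninj : ∀ h1 ∈ F, ∀ h2 ∈ F, n h1 = n h2 → h1 = h2 := by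
      intro h1 hh1 h2 hh2 hnn
      by_contra hne
      have hee : e h1 ≠ e h2 := fun h => hne (he h)
      rcases lt_trichotomy (r h1) (r h2) with h | h | h
      · exact absurd hnn (Nat.ne_of_lt (hstrict h1 hh1 h2 hh2 (Or.inl h)))
      · rcases lt_or_gt_of_ne hee with h' | h'
        · exact absurd hnn (Nat.ne_of_lt (hstrict h1 hh1 h2 hh2 (Or.inr ⟨h, h'⟩)))
        · exact absurd hnn.symm (Nat.ne_of_lt (hstrict h2 hh2 h1 hh1 (Or.inr ⟨h.symm, h'⟩)))
      · exact absurd hnn.symm (Nat.ne_of_lt (hstrict h2 hh2 h1 hh1 (Or.inl h)))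
    -- the cardinality-weighted bound
    have hkey : ∀ h ∈ F, ((m + n h : ℕ) : ℝ) * r h ^ (-τ) ≤ M := by
      intro h hh
      set G : Finset (Fin d → ℤ) := hA.toFinset ∪ F.filter (fun x => P x h) with hGdef
      have hdisj : Disjoint hA.toFinset (F.filter (fun x => P x h)) := by
        rw [Finset.disjoint_left]
        intro x hx hx'
        rw [Set.Finite.mem_toFinset] at hx
        exact hF x (Finset.mem_filter.1 hx').1 hx
      have hcard : G.card = m + n h := by
        rw [hGdef, Finset.card_union_of_disjoint hdisj]
      have hrg : ∀ g ∈ G, r g ≤ r h := by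
        intro g hg
        rcases Finset.mem_union.1 hg with hg | hg
        · rw [Set.Finite.mem_toFinset] at hg
          have h2 : r g ≤ N := hg
          have h3 : ¬ r h ≤ N := hF h hh
          linarith [not_le.1 h3]
        · rcases Finset.mem_filter.1 hg with ⟨-, hP⟩
          rcases hP with h' | ⟨h', -⟩
          · exact h'.le
          · exact h'.le
      have hmono : ∀ g ∈ G, r h ^ (-τ) ≤ r g ^ (-τ) := fun g hg =>
        Real.rpow_le_rpow_of_nonpos (hr0 g) (hrg g hg) (by linarith)
      calc ((m + n h : ℕ) : ℝ) * r h ^ (-τ) = G.card • (r h ^ (-τ)) := by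
            rw [hcard, nsmul_eq_mul]
        _ ≤ ∑ g ∈ G, r g ^ (-τ) := Finset.card_nsmul_le_sum G _ _ hmono
        _ ≤ M := kv_Msum hα hτ0 hs γ hγpos hγ1 G
    -- per-element bound
    have hper : ∀ h ∈ F, (r h)⁻¹ ≤ M ^ (1/τ) * ((m + n h : ℕ) : ℝ) ^ (-(1/τ)) := by
      intro h hh
      have hc0 : (0:ℝ) < ((m + n h : ℕ) : ℝ) := by
        have h0 : 0 < m + n h := by omega
        exact_mod_cast h0
      have h1 : r h ^ (-τ) ≤ M / ((m + n h : ℕ) : ℝ) := by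
        rw [le_div_iff₀ hc0]
        calc r h ^ (-τ) * ((m + n h : ℕ) : ℝ) = ((m + n h : ℕ) : ℝ) * r h ^ (-τ) := by ring
          _ ≤ M := hkey h hh
      have h2 : (r h ^ (-τ)) ^ (1/τ) ≤ (M / ((m + n h : ℕ) : ℝ)) ^ (1/τ) :=
        Real.rpow_le_rpow (Real.rpow_nonneg (hr0 h).le _) h1 (by positivity)
      have h3 : (r h ^ (-τ)) ^ (1/τ) = (r h)⁻¹ := by
        rw [← Real.rpow_mul (hr0 h).le, show -τ * (1/τ) = -1 by field_simp, Real.rpow_neg_one]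
      have h4 : (M / ((m + n h : ℕ) : ℝ)) ^ (1/τ)
          = M ^ (1/τ) * ((m + n h : ℕ) : ℝ) ^ (-(1/τ)) := by
        rw [Real.div_rpow hM0.le hc0.le, Real.rpow_neg hc0.le, div_eq_mul_inv]
      calc (r h)⁻¹ = (r h ^ (-τ)) ^ (1/τ) := h3.symm
        _ ≤ (M / ((m + n h : ℕ) : ℝ)) ^ (1/τ) := h2
        _ = M ^ (1/τ) * ((m + n h : ℕ) : ℝ) ^ (-(1/τ)) := h4
    -- assemble
    set g2 : ℕ → ℝ := fun i => ((m + i : ℕ) : ℝ) ^ (-(1/τ)) with hg2def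
    have hg2nn : ∀ i, 0 ≤ g2 i := fun i => Real.rpow_nonneg (Nat.cast_nonneg _) _
    have hsum : ∑ h ∈ F, (r h)⁻¹ ≤ M ^ (1/τ) * ∑ h ∈ F, g2 (n h) := by
      rw [Finset.mul_sum]
      exact Finset.sum_le_sum hper
    have himg : ∑ i ∈ F.image n, g2 i = ∑ h ∈ F, g2 (n h) := Finset.sum_image hninj
    have hsub2 : F.image n ⊆ Finset.Icc 1 F.card := by
      intro i hi
      rcases Finset.mem_image.1 hi with ⟨h, hh, rfl⟩
      exact Finset.mem_Icc.2 ⟨hn1 h hh, hnle h⟩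
    have h6 : ∑ i ∈ F.image n, g2 i ≤ ∑ i ∈ Finset.Icc 1 F.card, g2 i :=
      Finset.sum_le_sum_of_subset_of_nonneg hsub2 (fun i _ _ => hg2nn i)
    have h7 : ∑ i ∈ Finset.Icc 1 F.card, g2 i = ∑ i ∈ Finset.range F.card, g2 (1 + i) := by
      refine Finset.sum_nbij' (fun i => i - 1) (fun i => 1 + i) ?_ ?_ ?_ ?_ ?_
      · intro i hi; simp only [Finset.mem_Icc] at hi; simp only [Finset.mem_range]; omega
      · intro i hi; simp only [Finset.mem_range] at hi; simp only [Finset.mem_Icc]; omega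
      · intro i hi; simp only [Finset.mem_Icc] at hi; show 1 + (i - 1) = i; omega
      · intro i _; show (1 + i) - 1 = i; omega
      · intro i hi
        simp only [Finset.mem_Icc] at hi
        show g2 i = g2 (1 + (i - 1))
        congr 1
        omega
    have h8 : ∑ i ∈ Finset.range F.card, g2 (1 + i) ≤ τ/(1-τ) * (m:ℝ) ^ (1 - 1/τ) := by
      refine le_trans (le_of_eq ?_) (kv_tail hτ0 hτ2 m F.card hm1)
      refine Finset.sum_congr rfl fun i _ => ?_
      rw [hg2def]
      congr 1
      push_cast
      ring
    have hMτ : (0:ℝ) ≤ M ^ (1/τ) := Real.rpow_nonneg hM0.le _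
    have hprod : M ^ (1/τ) = ∏ j, (1 + 2 * Z * γ j ^ τ) ^ (1/τ) := by
      rw [hMdef]
      refine (Real.finset_prod_rpow Finset.univ _ (fun j _ => ?_) (1/τ)).symm
      have : 0 ≤ γ j ^ τ := Real.rpow_nonneg (hγpos j).le _
      nlinarith
    calc ∑ h ∈ F, (r h)⁻¹ ≤ M ^ (1/τ) * ∑ h ∈ F, g2 (n h) := hsum
      _ ≤ M ^ (1/τ) * (τ/(1-τ) * (m:ℝ) ^ (1 - 1/τ)) := by
          refine mul_le_mul_of_nonneg_left ?_ hMτ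
          rw [← himg]
          exact le_trans h6 (le_of_eq h7 |>.trans h8)
      _ = RHS := by
          rw [hRHSdef, hprod]
          ring
  -- conclude via tsum
  refine tsum_le_of_sum_le' hRHS0 fun sF => ?_
  have heq := Finset.sum_image (s := sF) (g := Subtype.val)
    (f := fun h => (r h)⁻¹) (fun x _ y _ hxy => Subtype.val_injective hxy)
  calc ∑ x ∈ sF, (∏ j, max 1 ((γ j)⁻¹ * |(x.1 j : ℝ)| ^ α))⁻¹
      = ∑ h ∈ sF.image Subtype.val, (r h)⁻¹ := heq.symm
    _ ≤ RHS := key _ (fun h hh => by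
        rcases Finset.mem_image.1 hh with ⟨x, -, rfl⟩
        exact x.2)
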